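/- arXiv:alg-geom/9503024 — 2 statements merged into one kernel-verified Lean document; each statement's English description precedes it below -/
import Mathlib

section
/- Let a_1 ≤ ... ≤ a_{r+1} and b_1 ≤ ... ≤ b_{r+1} be integers and let N be an integer. Suppose that for every t ≥ N, Σ_{i=1}^{r+1} C(a_i − t − 1, 3)·[a_i − t ≥ 4] = Σ_{i=1}^{r+1} C(b_i − t − 1, 3)·[b_i − t ≥ 4] (where C(·,3) is the binomial coefficient and [P] = 1 if P holds, else 0). Then the multisets { a_i : a_i ≥ N + 4 } and { b_i : b_i ≥ N + 4 } are equal. -/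
lemma ch2 (n : ℕ) : 2 * (n.choose 2 : ℤ) = n * (n - 1) := by
  induction n with
  | zero => norm_num
  | succ n ih =>
    rw [Nat.choose_succ_succ, Nat.choose_one_right]
    push_cast
    push_cast at ih
    ring_nf
    ring_nf at ih
    linarith

lemma ch3 (n : ℕ) : 6 * (n.choose 3 : ℤ) = n * (n - 1) * (n - 2) := by
  induction n with
  | zero => norm_num
  | succ n ih =>
    rw [Nat.choose_succ_succ]
    have h2 := ch2 n
    push_cast
    push_cast at ih h2
    nlinarith [ih, h2]

lemma term_diff (c t : ℤ) :
    (if 4 ≤ c - t then ((c - t - 1).toNat.choose 3 : ℤ) else 0)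
      - 3 * (if 4 ≤ c - (t+1) then ((c - (t+1) - 1).toNat.choose 3 : ℤ) else 0)
      + 3 * (if 4 ≤ c - (t+2) then ((c - (t+2) - 1).toNat.choose 3 : ℤ) else 0)
      - (if 4 ≤ c - (t+3) then ((c - (t+3) - 1).toNat.choose 3 : ℤ) else 0)
      = if t + 4 ≤ c then 1 else 0 := by
  rcases lt_or_ge (c - t) 4 with h | h
  · rw [if_neg (by omega), if_neg (by omega), if_neg (by omega), if_neg (by omega),
      if_neg (by omega)]
    ring
  · rw [if_pos h, if_pos (show t + 4 ≤ c by omega)]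
    rcases lt_or_ge (c - t) 5 with h5 | h5
    · have : c - t = 4 := by omega
      rw [if_neg (by omega), if_neg (by omega), if_neg (by omega)]
      have e : c - t - 1 = 3 := by omega
      rw [e]; decide
    · rw [if_pos (by omega)]
      rcases lt_or_ge (c - t) 6 with h6 | h6
      · have : c - t = 5 := by omega
        rw [if_neg (by omega), if_neg (by omega)]
        have e1 : c - t - 1 = 4 := by omega
        have e2 : c - (t+1) - 1 = 3 := by omega
        rw [e1, e2]; decide
      · rw [if_pos (by omega)]
        rcases lt_or_ge (c - t) 7 with h7 | h7
        · have : c - t = 6 := by omega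
          rw [if_neg (by omega)]
          have e1 : c - t - 1 = 5 := by omega
          have e2 : c - (t+1) - 1 = 4 := by omega
          have e3 : c - (t+2) - 1 = 3 := by omega
          rw [e1, e2, e3]; decide
        · rw [if_pos (by omega)]
          have k1 := ch3 (c - t - 1).toNat
          have k2 := ch3 (c - (t+1) - 1).toNat
          have k3 := ch3 (c - (t+2) - 1).toNat
          have k4 := ch3 (c - (t+3) - 1).toNat
          rw [Int.toNat_of_nonneg (by omega)] at k1 k2 k3 k4
          nlinarith [k1, k2, k3, k4]

/-- If two non-decreasing `(r+1)`-tuples of twists give the same value of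
`Σᵢ C(aᵢ − t − 1, 3)·[aᵢ − t ≥ 4]` for all `t ≥ N`, then the multisets of
entries `≥ N + 4` agree. -/
theorem multiset_of_large_twists_determined (r : ℕ) (N : ℤ)
    (a b : Fin (r + 1) → ℤ) (ha : Monotone a) (hb : Monotone b)
    (hsum : ∀ t : ℤ, N ≤ t →
      (∑ i, if 4 ≤ a i - t then ((a i - t - 1).toNat.choose 3 : ℤ) else 0)
        = ∑ i, if 4 ≤ b i - t then ((b i - t - 1).toNat.choose 3 : ℤ) else 0) :
    (Finset.univ.val.map a).filter (fun x => N + 4 ≤ x)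
      = (Finset.univ.val.map b).filter (fun x => N + 4 ≤ x) := by
  -- Step 1: for every threshold s ≥ N + 4, the number of entries ≥ s agrees.
  have key : ∀ s : ℤ, N + 4 ≤ s →
      (∑ i, if s ≤ a i then (1:ℤ) else 0) = ∑ i, if s ≤ b i then (1:ℤ) else 0 := by
    intro s hs
    set t := s - 4 with htdef
    have ht : N ≤ t := by omega
    have expand : ∀ f : Fin (r + 1) → ℤ,
        (∑ i, if s ≤ f i then (1:ℤ) else 0)
          = (∑ i, if 4 ≤ f i - t then ((f i - t - 1).toNat.choose 3 : ℤ) else 0)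
            - 3 * (∑ i, if 4 ≤ f i - (t+1) then ((f i - (t+1) - 1).toNat.choose 3 : ℤ) else 0)
            + 3 * (∑ i, if 4 ≤ f i - (t+2) then ((f i - (t+2) - 1).toNat.choose 3 : ℤ) else 0)
            - (∑ i, if 4 ≤ f i - (t+3) then ((f i - (t+3) - 1).toNat.choose 3 : ℤ) else 0) := by
      intro f
      rw [Finset.mul_sum, Finset.mul_sum, ← Finset.sum_sub_distrib,
        ← Finset.sum_add_distrib, ← Finset.sum_sub_distrib]
      refine Finset.sum_congr rfl fun i _ => ?_
      have := term_diff (f i) t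
      have hcond : (t + 4 ≤ f i) ↔ (s ≤ f i) := by omega
      rw [if_congr hcond rfl rfl] at this
      exact this.symm
    rw [expand a, expand b, hsum t ht, hsum (t+1) (by omega), hsum (t+2) (by omega),
      hsum (t+3) (by omega)]
  -- Step 2: for each x ≥ N + 4, the number of entries equal to x agrees.
  have cnt : ∀ x : ℤ, N + 4 ≤ x →
      (∑ i, if x = a i then (1:ℤ) else 0) = ∑ i, if x = b i then (1:ℤ) else 0 := by
    intro x hx
    have e : ∀ f : Fin (r + 1) → ℤ,
        (∑ i, if x = f i then (1:ℤ) else 0)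
          = (∑ i, if x ≤ f i then (1:ℤ) else 0) - ∑ i, if x + 1 ≤ f i then (1:ℤ) else 0 := by
      intro f
      rw [← Finset.sum_sub_distrib]
      refine Finset.sum_congr rfl fun i _ => ?_
      split_ifs <;> omega
    rw [e a, e b, key x hx, key (x+1) (by omega)]
  -- Step 3: conclude multiset equality via counts.
  ext x
  simp only [Multiset.count_filter]
  split_ifs with hx
  · have hcount : ∀ f : Fin (r + 1) → ℤ,
        Multiset.count x (Finset.univ.val.map f) = ∑ i, if x = f i then 1 else 0 := by
      intro f
      rw [Multiset.count_map, ← Finset.filter_val]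
      exact Finset.card_filter _ _
    rw [hcount a, hcount b]
    have := cnt x hx
    have hcast : ∀ f : Fin (r + 1) → ℤ,
        ((∑ i, if x = f i then (1:ℕ) else 0 : ℕ) : ℤ) = ∑ i, if x = f i then (1:ℤ) else 0 := by
      intro f
      push_cast
      rfl
    exact_mod_cast (hcast a).trans (this.trans (hcast b).symm)
  · rfl
end

section
/- Let A = (a_{ij}) be defined for a chain of 'link degrees' b_0 ≤ b_1 ≤ ... ≤ b_{m−1} and a threshold function: say index i is 'active' if b_i ≥ c + i for a fixed integer c. Suppose exactly k indices are active. Then after the rearrangement b'_0 = b_s − s, b'_i = b_{i−1} + 1 for 0 < i ≤ s, b'_i = b_i for i > s (where s is the first active index), the number of active indices of (b'_i) (i.e. indices with b'_i ≥ c + i) is still exactly k, and index 0 is active for (b'_i). -/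
/-- Flipping the first 'active' link down to position 0 preserves the number of
active indices: with `b_0 ≤ b_1 ≤ ⋯` non-decreasing, index `i` active when
`b_i ≥ c + i`, `s < m` the first active index, and exactly `k` active indices
among `0, …, m−1`, the rearranged sequence `b'_0 = b_s − s`,
`b'_i = b_{i−1} + 1` for `0 < i ≤ s`, `b'_i = b_i` for `i > s` has exactly `k`
active indices and index `0` active. -/
theorem flip_first_active (b : ℕ → ℤ) (m s : ℕ) (c : ℤ) (k : ℕ)
    (hmono : ∀ i, b i ≤ b (i + 1))
    (hs : s < m)
    (hactive : c + s ≤ b s)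
    (hfirst : ∀ i < s, b i < c + i)
    (hcount : ((Finset.range m).filter (fun i => c + i ≤ b i)).card = k) :
    (((Finset.range m).filter (fun i =>
        c + i ≤ (if i = 0 then b s - s else if i ≤ s then b (i - 1) + 1 else b i))).card = k)
    ∧ c ≤ b s - s := by
  have hc : c ≤ b s - s := by linarith
  refine ⟨?_, hc⟩
  set T : Finset ℕ := (Finset.range m).filter (fun i => s < i ∧ c + i ≤ b i) with hT
  have hold : (Finset.range m).filter (fun i => c + i ≤ b i) = insert s T := by
    ext i
    simp only [hT, Finset.mem_filter, Finset.mem_range, Finset.mem_insert]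
    constructor
    · rintro ⟨him, hi⟩
      rcases lt_trichotomy i s with h | h | h
      · exact absurd hi (not_le.2 (hfirst i h))
      · exact Or.inl h
      · exact Or.inr ⟨him, h, hi⟩
    · rintro (rfl | ⟨him, _, hi⟩)
      · exact ⟨hs, hactive⟩
      · exact ⟨him, hi⟩
  have hnew : (Finset.range m).filter (fun i =>
        c + i ≤ (if i = 0 then b s - s else if i ≤ s then b (i - 1) + 1 else b i))
      = insert 0 T := by
    ext i
    simp only [hT, Finset.mem_filter, Finset.mem_range, Finset.mem_insert]
    constructor
    · rintro ⟨him, hi⟩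
      rcases Nat.eq_zero_or_pos i with rfl | hipos
      · exact Or.inl rfl
      · rcases le_or_gt i s with hle | hgt
        · exfalso
          rw [if_neg (Nat.pos_iff_ne_zero.1 hipos), if_pos hle] at hi
          have h1 : i - 1 < s := by omega
          have h2 := hfirst (i - 1) h1
          have : ((i - 1 : ℕ) : ℤ) = (i : ℤ) - 1 := by
            push_cast [Nat.cast_sub hipos]; ring
          rw [this] at h2
          linarith
        · rw [if_neg (Nat.pos_iff_ne_zero.1 hipos), if_neg (not_le.2 hgt)] at hi
          exact Or.inr ⟨him, hgt, hi⟩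
    · rintro (rfl | ⟨him, hgt, hi⟩)
      · refine ⟨by omega, ?_⟩
        simp only [if_pos rfl]
        push_cast
        linarith
      · have h0 : i ≠ 0 := by omega
        refine ⟨him, ?_⟩
        rw [if_neg h0, if_neg (not_le.2 hgt)]
        exact hi
  rw [hnew, ← hcount, hold]
  rw [Finset.card_insert_of_notMem, Finset.card_insert_of_notMem]
  · simp [hT]
  · simp [hT]
end
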